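/- Let (r_0, …, r_h) be a free sequence of positive integers and set N = (Σ_{k=1}^h (e_k − 1) r_k) − r_0 ∈ ℤ. Then every integer z > N belongs to Γ = ⟨r_0, …, r_h⟩ (viewed inside ℤ), and if N ≥ 0 then N ∉ Γ. In other words, the Frobenius number of Γ is (Σ_{k=1}^h (e_k − 1) r_k) − r_0. -/

import Mathlib

/-- A sequence `r 0, …, r h` of positive integers, together with the chain of gcds
`d 1 = r 0`, `d (k+1) = gcd (d k) (r k)`, is *free* if `d (h+1) = 1` (so the `r k` are
coprime) and `e_k · r_k ∈ ⟨r_0, …, r_{k−1}⟩` for all `1 ≤ k ≤ h`, where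
`e k = d k / d (k+1)`. -/
def IsFreeSeq (h : ℕ) (r d : ℕ → ℕ) : Prop :=
  (∀ k ≤ h, 0 < r k) ∧
  d 1 = r 0 ∧
  (∀ k, 1 ≤ k → k ≤ h → d (k + 1) = Nat.gcd (d k) (r k)) ∧
  d (h + 1) = 1 ∧
  ∀ k, 1 ≤ k → k ≤ h →
    (d k / d (k + 1)) * r k ∈ AddSubmonoid.closure (r '' Set.Iio k)

open Finset AddSubmonoid

section Helpers

variable {h : ℕ} {r d : ℕ → ℕ}

lemma free_d_pos (hpos : ∀ k ≤ h, 0 < r k) (hd1 : d 1 = r 0)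
    (hgcd : ∀ k, 1 ≤ k → k ≤ h → d (k + 1) = Nat.gcd (d k) (r k)) :
    ∀ k, 1 ≤ k → k ≤ h + 1 → 0 < d k := by
  intro k hk1 hk2
  induction k with
  | zero => omega
  | succ n ih =>
    rcases Nat.eq_zero_or_pos n with hn | hn
    · subst hn; rw [hd1]; exact hpos 0 (Nat.zero_le _)
    · rw [hgcd n hn (by omega)]
      exact Nat.gcd_pos_of_pos_right _ (hpos n (by omega))

lemma free_d_dvd_d (hgcd : ∀ k, 1 ≤ k → k ≤ h → d (k + 1) = Nat.gcd (d k) (r k)) :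
    ∀ n j, 1 ≤ j → j + n ≤ h + 1 → d (j + n) ∣ d j := by
  intro n
  induction n with
  | zero => exact fun j _ _ => dvd_refl _
  | succ n ih =>
    intro j hj1 hj2
    have h1 : d (j + n + 1) ∣ d (j + n) := by
      rw [hgcd (j + n) (by omega) (by omega)]; exact Nat.gcd_dvd_left _ _
    have h2 : d (j + (n + 1)) ∣ d (j + n) := by
      rw [show j + (n + 1) = j + n + 1 by omega]; exact h1
    exact h2.trans (ih j hj1 (by omega))

lemma free_d_dvd_r (hd1 : d 1 = r 0)
    (hgcd : ∀ k, 1 ≤ k → k ≤ h → d (k + 1) = Nat.gcd (d k) (r k)) :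
    ∀ j k, j < k → k ≤ h + 1 → d k ∣ r j := by
  intro j k hjk hk
  rcases Nat.eq_zero_or_pos j with hj | hj
  · subst hj
    have := free_d_dvd_d (h := h) (r := r) hgcd (k - 1) 1 le_rfl (by omega)
    rw [show 1 + (k - 1) = k by omega] at this
    exact hd1 ▸ this
  · have h1 : d k ∣ d (j + 1) := by
      have := free_d_dvd_d (h := h) (r := r) hgcd (k - (j+1)) (j+1) (by omega) (by omega)
      rwa [show j + 1 + (k - (j+1)) = k by omega] at this
    have h2 : d (j + 1) ∣ r j := by
      rw [hgcd j hj (by omega)]; exact Nat.gcd_dvd_right _ _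
    exact h1.trans h2

lemma free_e_pos (hpos : ∀ k ≤ h, 0 < r k) (hd1 : d 1 = r 0)
    (hgcd : ∀ k, 1 ≤ k → k ≤ h → d (k + 1) = Nat.gcd (d k) (r k)) :
    ∀ k, 1 ≤ k → k ≤ h → 0 < d k / d (k + 1) := by
  intro k hk1 hk2
  have hdvd : d (k + 1) ∣ d k := by
    rw [hgcd k hk1 hk2]; exact Nat.gcd_dvd_left _ _
  have hp1 : 0 < d (k + 1) := free_d_pos hpos hd1 hgcd (k + 1) (by omega) (by omega)
  have hp2 : 0 < d k := free_d_pos hpos hd1 hgcd k hk1 (by omega)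
  exact Nat.div_pos (Nat.le_of_dvd hp2 hdvd) hp1

/-- decomposition: strip off the top generator. -/
lemma free_decomp (m : ℕ) {v : ℕ}
    (hv : v ∈ AddSubmonoid.closure (r '' Set.Iio (m + 1))) :
    ∃ w ∈ AddSubmonoid.closure (r '' Set.Iio m), ∃ b : ℕ, v = w + b * r m := by
  induction hv using AddSubmonoid.closure_induction with
  | mem x hx =>
    obtain ⟨j, hj, rfl⟩ := hx
    simp only [Set.mem_Iio] at hj
    rcases Nat.lt_or_ge j m with hjm | hjm
    · exact ⟨r j, subset_closure ⟨j, hjm, rfl⟩, 0, by simp⟩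
    · have : j = m := by omega
      subst this
      exact ⟨0, zero_mem _, 1, by simp⟩
  | zero => exact ⟨0, zero_mem _, 0, by simp⟩
  | add x y hx hy ihx ihy =>
    obtain ⟨w1, hw1, b1, rfl⟩ := ihx
    obtain ⟨w2, hw2, b2, rfl⟩ := ihy
    exact ⟨w1 + w2, add_mem hw1 hw2, b1 + b2, by ring⟩

/-- canonical representation for elements of the monoid. -/
lemma free_canon (hpos : ∀ k ≤ h, 0 < r k) (hd1 : d 1 = r 0)
    (hgcd : ∀ k, 1 ≤ k → k ≤ h → d (k + 1) = Nat.gcd (d k) (r k))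
    (hmem : ∀ k, 1 ≤ k → k ≤ h →
      (d k / d (k + 1)) * r k ∈ AddSubmonoid.closure (r '' Set.Iio k)) :
    ∀ m, m ≤ h → ∀ v : ℕ, v ∈ AddSubmonoid.closure (r '' Set.Iio (m + 1)) →
      ∃ a : ℕ → ℕ, (∀ k, 1 ≤ k → k ≤ m → a k < d k / d (k + 1)) ∧
        v = a 0 * r 0 + ∑ k ∈ Icc 1 m, a k * r k := by
  intro m
  induction m with
  | zero =>
    intro _ v hv
    have h0 : (Set.Iio 1 : Set ℕ) = {0} := by ext x; simp [Nat.lt_one_iff]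
    rw [h0, Set.image_singleton] at hv
    obtain ⟨n, hn⟩ := AddSubmonoid.mem_closure_singleton.mp hv
    exact ⟨fun _ => n, by omega, by simp [← hn, smul_eq_mul]⟩
  | succ m ih =>
    intro hm v hv
    obtain ⟨w, hw, b, rfl⟩ := free_decomp (m + 1) hv
    set e := d (m + 1) / d (m + 2) with he
    have hepos : 0 < e := free_e_pos hpos hd1 hgcd (m + 1) (by omega) hm
    have hw2 : w + (b / e) * (e * r (m + 1)) ∈
        AddSubmonoid.closure (r '' Set.Iio (m + 1)) := by
      refine add_mem hw ?_
      have := hmem (m + 1) (by omega) hm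
      simpa [smul_eq_mul] using nsmul_mem this (b / e)
    obtain ⟨a, ha, heq⟩ := ih (by omega) _ hw2
    refine ⟨Function.update a (m + 1) (b % e), ?_, ?_⟩
    · intro k hk1 hk2
      rcases Nat.lt_or_ge k (m + 1) with hk | hk
      · rw [Function.update_of_ne (by omega)]; exact ha k hk1 (by omega)
      · have : k = m + 1 := by omega
        subst this
        rw [Function.update_self]
        exact Nat.mod_lt _ hepos
    · have hsplit : Icc 1 (m + 1) = insert (m + 1) (Icc 1 m) :=
        (Finset.insert_Icc_right_eq_Icc_add_one (by omega)).symm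
      rw [hsplit, Finset.sum_insert (by simp), Function.update_self]
      have hrw : ∀ k ∈ Icc 1 m, Function.update a (m + 1) (b % e) k * r k
          = a k * r k := by
        intro k hk
        simp only [mem_Icc] at hk
        rw [Function.update_of_ne (by omega)]
      rw [Finset.sum_congr rfl hrw, Function.update_of_ne (by omega)]
      calc w + b * r (m + 1) = (w + (b / e) * (e * r (m + 1))) + (b % e) * r (m + 1) := by
            conv_lhs => rw [← Nat.div_add_mod b e]
            ring
        _ = a 0 * r 0 + ((b % e) * r (m + 1) + ∑ k ∈ Icc 1 m, a k * r k) := by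
            rw [heq]; ring

/-- uniqueness of the canonical representation (on the 0-th coefficient). -/
lemma free_uniq (hpos : ∀ k ≤ h, 0 < r k) (hd1 : d 1 = r 0)
    (hgcd : ∀ k, 1 ≤ k → k ≤ h → d (k + 1) = Nat.gcd (d k) (r k)) :
    ∀ m, m ≤ h → ∀ a a' : ℕ → ℤ,
      (∀ k, 1 ≤ k → k ≤ m → 0 ≤ a k ∧ a k < ((d k / d (k + 1) : ℕ) : ℤ)) →
      (∀ k, 1 ≤ k → k ≤ m → 0 ≤ a' k ∧ a' k < ((d k / d (k + 1) : ℕ) : ℤ)) →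
      a 0 * (r 0 : ℤ) + ∑ k ∈ Icc 1 m, a k * (r k : ℤ)
        = a' 0 * (r 0 : ℤ) + ∑ k ∈ Icc 1 m, a' k * (r k : ℤ) →
      a 0 = a' 0 := by
  intro m
  induction m with
  | zero =>
    intro _ a a' _ _ heq
    rw [show Icc 1 0 = (∅ : Finset ℕ) from rfl, Finset.sum_empty, Finset.sum_empty,
      add_zero, add_zero] at heq
    have hr0 : (0 : ℤ) < (r 0 : ℤ) := by exact_mod_cast hpos 0 (Nat.zero_le _)
    have := mul_right_cancel₀ (ne_of_gt hr0) (by simpa using heq)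
    exact this
  | succ m ih =>
    intro hm a a' ha ha' heq
    set g := d (m + 2) with hg
    set e := d (m + 1) / g with he
    have hgcd' : g = Nat.gcd (d (m + 1)) (r (m + 1)) := hgcd (m + 1) (by omega) hm
    have hgpos : 0 < g := free_d_pos hpos hd1 hgcd (m + 2) (by omega) (by omega)
    have hgd : g ∣ d (m + 1) := hgcd' ▸ Nat.gcd_dvd_left _ _
    have hgr : g ∣ r (m + 1) := hgcd' ▸ Nat.gcd_dvd_right _ _
    set s := r (m + 1) / g with hs
    have hde : d (m + 1) = e * g := (Nat.div_mul_cancel hgd).symm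
    have hrs : r (m + 1) = s * g := (Nat.div_mul_cancel hgr).symm
    have hcop : Nat.Coprime e s := by
      rw [he, hs, hgcd']
      exact Nat.coprime_div_gcd_div_gcd (hgcd' ▸ hgpos)
    -- d (m+1) divides all r j, j ≤ m
    have hdvdr : ∀ j, j ≤ m → (↑(d (m + 1)) : ℤ) ∣ (r j : ℤ) := by
      intro j hj
      exact_mod_cast Int.natCast_dvd_natCast.mpr
        (free_d_dvd_r hd1 hgcd j (m + 1) (by omega) (by omega))
    set c := a (m + 1) - a' (m + 1) with hc
    have hsplit : Icc 1 (m + 1) = insert (m + 1) (Icc 1 m) :=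
      (Finset.insert_Icc_right_eq_Icc_add_one (by omega)).symm
    rw [hsplit, Finset.sum_insert (by simp), Finset.sum_insert (by simp)] at heq
    have hkey : c * (r (m + 1) : ℤ) = (a' 0 - a 0) * (r 0 : ℤ)
        + ∑ k ∈ Icc 1 m, (a' k - a k) * (r k : ℤ) := by
      rw [hc]
      simp only [sub_mul, Finset.sum_sub_distrib]
      linarith [heq]
    have hdvd : (↑(d (m + 1)) : ℤ) ∣ c * (r (m + 1) : ℤ) := by
      rw [hkey]
      refine dvd_add (Dvd.dvd.mul_left ?_ _) (Finset.dvd_sum ?_)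
      · have : (↑(d (m + 1)) : ℤ) ∣ (r 0 : ℤ) := by
          exact_mod_cast Int.natCast_dvd_natCast.mpr
            (free_d_dvd_r hd1 hgcd 0 (m + 1) (by omega) (by omega))
        exact this
      · intro k hk
        simp only [mem_Icc] at hk
        exact Dvd.dvd.mul_left (hdvdr k hk.2) _
    have hec : (e : ℤ) ∣ c := by
      have h1 : ((e : ℤ) * g) ∣ (c * s) * g := by
        have : c * (r (m + 1) : ℤ) = (c * s) * g := by
          rw [hrs]; push_cast; ring
        rw [← this]
        exact_mod_cast hde ▸ hdvd
      have h2 : (e : ℤ) ∣ c * s :=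
        (mul_dvd_mul_iff_right (by exact_mod_cast hgpos.ne' : (g : ℤ) ≠ 0)).mp h1
      exact (Nat.isCoprime_iff_coprime.mpr hcop).dvd_of_dvd_mul_right h2
    have hbnd1 := ha (m + 1) (by omega) le_rfl
    have hbnd2 := ha' (m + 1) (by omega) le_rfl
    have hc0 : c = 0 := by
      refine Int.eq_zero_of_abs_lt_dvd hec ?_
      rw [abs_lt]
      constructor <;> [linarith [hbnd1.1, hbnd2.2]; linarith [hbnd1.2, hbnd2.1]]
    have htop : a (m + 1) = a' (m + 1) := by linarith [hc0, hc]
    refine ih (by omega) a a' (fun k h1 h2 => ha k h1 (by omega))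
      (fun k h1 h2 => ha' k h1 (by omega)) ?_
    rw [htop] at heq
    linarith [heq]

/-- existence of near-representations for any integer. -/
lemma free_exist (hpos : ∀ k ≤ h, 0 < r k) (hd1 : d 1 = r 0)
    (hgcd : ∀ k, 1 ≤ k → k ≤ h → d (k + 1) = Nat.gcd (d k) (r k)) :
    ∀ m, m ≤ h → ∀ z : ℤ, (↑(d (m + 1)) : ℤ) ∣ z →
      ∃ a : ℕ → ℕ, (∀ k, 1 ≤ k → k ≤ m → a k < d k / d (k + 1)) ∧
        (↑(r 0) : ℤ) ∣ (z - ∑ k ∈ Icc 1 m, (a k : ℤ) * (r k : ℤ)) := by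
  intro m
  induction m with
  | zero =>
    intro _ z hz
    refine ⟨fun _ => 0, by omega, ?_⟩
    rw [show Icc 1 0 = (∅ : Finset ℕ) from rfl, Finset.sum_empty, sub_zero, ← hd1]
    exact hz
  | succ m ih =>
    intro hm z hz
    set g := d (m + 2) with hg
    have hgcd' : g = Nat.gcd (d (m + 1)) (r (m + 1)) := hgcd (m + 1) (by omega) hm
    have hgpos : 0 < g := free_d_pos hpos hd1 hgcd (m + 2) (by omega) (by omega)
    have hgd : g ∣ d (m + 1) := hgcd' ▸ Nat.gcd_dvd_left _ _
    have hgr : g ∣ r (m + 1) := hgcd' ▸ Nat.gcd_dvd_right _ _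
    set e := d (m + 1) / g with he
    have hepos : 0 < e := free_e_pos hpos hd1 hgcd (m + 1) (by omega) hm
    -- Bezout
    obtain ⟨t, ht⟩ := hz
    have hbez : (g : ℤ) = d (m + 1) * Nat.gcdA (d (m + 1)) (r (m + 1))
        + r (m + 1) * Nat.gcdB (d (m + 1)) (r (m + 1)) := by
      rw [hgcd']; exact Nat.gcd_eq_gcd_ab _ _
    set x := t * Nat.gcdA (d (m + 1)) (r (m + 1)) with hx
    set y := t * Nat.gcdB (d (m + 1)) (r (m + 1)) with hy
    have hzxy : z = x * d (m + 1) + y * r (m + 1) := by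
      rw [ht, hx, hy]
      calc (g : ℤ) * t = (d (m + 1) * Nat.gcdA (d (m + 1)) (r (m + 1))
          + r (m + 1) * Nat.gcdB (d (m + 1)) (r (m + 1))) * t := by rw [← hbez]
        _ = _ := by ring
    set aT := (y % (e : ℤ)).toNat with haT
    have hemod : 0 ≤ y % (e : ℤ) := Int.emod_nonneg y (by exact_mod_cast hepos.ne')
    have hemodlt : y % (e : ℤ) < e := Int.emod_lt_of_pos y (by exact_mod_cast hepos)
    have haTlt : aT < e := by omega
    have haTval : (aT : ℤ) = y % (e : ℤ) := Int.toNat_of_nonneg hemod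
    -- d (m+1) ∣ e * r (m+1)
    have hder : d (m + 1) ∣ e * r (m + 1) := by
      have : e * r (m + 1) = d (m + 1) * (r (m + 1) / g) := by
        conv_lhs => rw [← Nat.div_mul_cancel hgr]
        rw [show e * (r (m + 1) / g * g) = (e * g) * (r (m + 1) / g) by ring,
          Nat.div_mul_cancel hgd]
      rw [this]; exact Dvd.intro _ rfl
    have hdz' : (↑(d (m + 1)) : ℤ) ∣ (z - (aT : ℤ) * r (m + 1)) := by
      have heq1 : z - (aT : ℤ) * r (m + 1)
          = x * d (m + 1) + (y / (e : ℤ)) * ((e : ℤ) * r (m + 1)) := by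
        rw [hzxy, haTval]
        have h3 : y - y % (e : ℤ) = (e : ℤ) * (y / (e : ℤ)) := by
          have := Int.emod_add_mul_ediv y (e : ℤ)
          linarith
        calc x * ↑(d (m + 1)) + y * ↑(r (m + 1)) - y % ↑e * ↑(r (m + 1))
            = x * ↑(d (m + 1)) + (y - y % ↑e) * ↑(r (m + 1)) := by ring
          _ = x * ↑(d (m + 1)) + ((e : ℤ) * (y / ↑e)) * ↑(r (m + 1)) := by rw [h3]
          _ = _ := by ring
      rw [heq1]
      exact dvd_add (dvd_mul_left _ _) (Dvd.dvd.mul_left (by exact_mod_cast hder) _)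
    obtain ⟨a, ha, hadvd⟩ := ih (by omega) _ hdz'
    refine ⟨Function.update a (m + 1) aT, ?_, ?_⟩
    · intro k hk1 hk2
      rcases Nat.lt_or_ge k (m + 1) with hk | hk
      · rw [Function.update_of_ne (by omega)]; exact ha k hk1 (by omega)
      · have : k = m + 1 := by omega
        subst this
        rw [Function.update_self]; exact haTlt
    · have hsplit : Icc 1 (m + 1) = insert (m + 1) (Icc 1 m) :=
        (Finset.insert_Icc_right_eq_Icc_add_one (by omega)).symm
      rw [hsplit, Finset.sum_insert (by simp), Function.update_self]
      have hrw : ∀ k ∈ Icc 1 m, ((Function.update a (m + 1) aT k : ℤ)) * (r k : ℤ)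
          = (a k : ℤ) * (r k : ℤ) := by
        intro k hk
        simp only [mem_Icc] at hk
        rw [Function.update_of_ne (by omega)]
      rw [Finset.sum_congr rfl hrw]
      have : z - ((aT : ℤ) * ↑(r (m + 1)) + ∑ k ∈ Icc 1 m, (a k : ℤ) * ↑(r k))
          = (z - (aT : ℤ) * ↑(r (m + 1))) - ∑ k ∈ Icc 1 m, (a k : ℤ) * ↑(r k) := by ring
      rw [this]
      exact hadvd

end Helpers

/-- The Frobenius number of the numerical semigroup generated by a free sequence is
`N = (Σ_{k=1}^h (e_k − 1) r_k) − r_0`: every integer `z > N` lies in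
`Γ = ⟨r_0, …, r_h⟩`, and if `N ≥ 0` then `N ∉ Γ`. -/
theorem frobenius_number_of_free_sequence (h : ℕ) (r d : ℕ → ℕ)
    (hfree : IsFreeSeq h r d) (N : ℤ)
    (hN : N = (∑ k ∈ Finset.Icc 1 h, (((d k / d (k + 1) : ℕ) : ℤ) - 1) * (r k : ℤ))
      - (r 0 : ℤ)) :
    (∀ z : ℤ, N < z → ∃ v ∈ AddSubmonoid.closure (r '' Set.Iic h), (v : ℤ) = z) ∧
    (0 ≤ N → ¬ ∃ v ∈ AddSubmonoid.closure (r '' Set.Iic h), (v : ℤ) = N) := by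
  obtain ⟨hpos, hd1, hgcd, hdh, hmem⟩ := hfree
  have hIicIio : (Set.Iic h : Set ℕ) = Set.Iio (h + 1) := by
    ext x; simp [Nat.lt_succ_iff]
  constructor
  · -- existence part
    intro z hz
    obtain ⟨a, ha, hdvd⟩ := free_exist hpos hd1 hgcd h le_rfl z (by rw [hdh]; exact one_dvd z)
    obtain ⟨q, hq⟩ := hdvd
    -- bound on the sum
    have hsum_le : ∑ k ∈ Icc 1 h, (a k : ℤ) * (r k : ℤ)
        ≤ ∑ k ∈ Icc 1 h, (((d k / d (k + 1) : ℕ) : ℤ) - 1) * (r k : ℤ) := by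
      refine Finset.sum_le_sum ?_
      intro k hk
      simp only [mem_Icc] at hk
      have h1 : (a k : ℤ) ≤ ((d k / d (k + 1) : ℕ) : ℤ) - 1 := by
        have h2 : a k + 1 ≤ d k / d (k + 1) := ha k hk.1 hk.2
        have h3 : ((a k + 1 : ℕ) : ℤ) ≤ ((d k / d (k + 1) : ℕ) : ℤ) := Nat.cast_le.mpr h2
        rw [Nat.cast_add, Nat.cast_one] at h3
        linarith
      exact mul_le_mul_of_nonneg_right h1 (by positivity)
    have hr0 : (0 : ℤ) < (r 0 : ℤ) := by exact_mod_cast hpos 0 (Nat.zero_le _)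
    have hqpos : 0 ≤ q := by
      by_contra hq0
      push_neg at hq0
      have hq1 : q ≤ -1 := by omega
      have : (r 0 : ℤ) * q ≤ -(r 0 : ℤ) := by nlinarith
      have hz' : z - ∑ k ∈ Icc 1 h, (a k : ℤ) * (r k : ℤ) ≤ -(r 0 : ℤ) := hq ▸ this
      have : z ≤ N := by
        rw [hN]
        linarith [hsum_le]
      omega
    refine ⟨q.toNat * r 0 + ∑ k ∈ Icc 1 h, a k * r k, ?_, ?_⟩
    · refine add_mem ?_ ?_
      · have hr0mem : r 0 ∈ r '' Set.Iic h := ⟨0, Nat.zero_le _, rfl⟩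
        simpa [smul_eq_mul] using nsmul_mem (AddSubmonoid.subset_closure hr0mem) q.toNat
      · refine AddSubmonoid.sum_mem _ ?_
        intro k hk
        simp only [mem_Icc] at hk
        have : r k ∈ r '' Set.Iic h := ⟨k, hk.2, rfl⟩
        simpa [smul_eq_mul] using nsmul_mem (AddSubmonoid.subset_closure this) (a k)
    · push_cast
      rw [Int.toNat_of_nonneg hqpos]
      have : (q : ℤ) * r 0 = z - ∑ k ∈ Icc 1 h, (a k : ℤ) * (r k : ℤ) := by
        rw [hq]; ring
      rw [this]; ring
  · -- non-membership part
    intro hN0 ⟨v, hv, hvN⟩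
    rw [hIicIio] at hv
    obtain ⟨a, ha, hva⟩ := free_canon hpos hd1 hgcd hmem h le_rfl v hv
    set B : ℕ → ℤ := fun k => if k = 0 then -1 else ((d k / d (k + 1) : ℕ) : ℤ) - 1 with hB
    have hepos : ∀ k, 1 ≤ k → k ≤ h → (1 : ℤ) ≤ ((d k / d (k + 1) : ℕ) : ℤ) := by
      intro k h1 h2
      exact_mod_cast free_e_pos hpos hd1 hgcd k h1 h2
    have key := free_uniq hpos hd1 hgcd h le_rfl (fun k => (a k : ℤ)) B
      (fun k h1 h2 => ⟨Int.natCast_nonneg _, Nat.cast_lt.mpr (ha k h1 h2)⟩)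
      (fun k h1 h2 => by
        simp only [hB, if_neg (by omega : k ≠ 0)]
        exact ⟨by linarith [hepos k h1 h2], by linarith⟩)
      (by
        have hBsum : ∀ k ∈ Icc 1 h, B k * (r k : ℤ)
            = (((d k / d (k + 1) : ℕ) : ℤ) - 1) * (r k : ℤ) := by
          intro k hk
          simp only [mem_Icc] at hk
          simp [hB, if_neg (by omega : k ≠ 0)]
        rw [Finset.sum_congr rfl hBsum]
        simp only [hB, if_pos rfl]
        have : (v : ℤ) = (a 0 : ℤ) * (r 0 : ℤ) + ∑ k ∈ Icc 1 h, (a k : ℤ) * (r k : ℤ) := by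
          rw [hva]; push_cast; ring
        rw [← this, hvN, hN]; ring)
    simp only [hB, if_pos rfl] at key
    have : (0 : ℤ) ≤ (a 0 : ℤ) := Int.natCast_nonneg _
    omega
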